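/- arXiv:1907.10350 — 2 statements merged into one kernel-verified Lean document; each statement's English description precedes it below -/
import Mathlib

section
/- Let R₁ and R₂ be finite rings with |Z(R₁)| = |Z(R₂)|, and let (φ, ψ) be an isoclinism between R₁ and R₂. Then for every r in the additive commutator subgroup [R₁, R₁], the r-noncommuting graph Γ_{R₁}^r is isomorphic (as a simple graph) to the ψ(r)-noncommuting graph Γ_{R₂}^{ψ(r)}. -/
/-- The `r`-noncommuting graph of a finite ring `R`: vertices are elements of `R`,
and distinct `x`, `y` are adjacent iff `x*y - y*x ≠ r` and `x*y - y*x ≠ -r`. -/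
def ncGraph {R : Type*} [NonUnitalRing R] (r : R) : SimpleGraph R where
  Adj x y := x ≠ y ∧ x * y - y * x ≠ r ∧ x * y - y * x ≠ -r
  symm := by
    refine ⟨?_⟩
    rintro x y ⟨h1, h2, h3⟩
    refine ⟨h1.symm, fun h => h3 ?_, fun h => h2 ?_⟩
    · rw [← neg_sub (y * x) (x * y), h]
    · rw [← neg_sub (y * x) (x * y), h, neg_neg]
  loopless := ⟨fun x h => h.1 rfl⟩


/-- The center of R as an additive subgroup. -/
def centerAdd (R : Type*) [NonUnitalRing R] : AddSubgroup R where
  carrier := {z | ∀ x, z * x = x * z}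
  zero_mem' := fun x => by rw [zero_mul, mul_zero]
  add_mem' := fun {a b} ha hb x => by rw [add_mul, mul_add, ha x, hb x]
  neg_mem' := fun {a} ha x => by rw [neg_mul, mul_neg, ha x]

/-- The additive subgroup [R, R] generated by all additive commutators. -/
def commSub (R : Type*) [NonUnitalRing R] : AddSubgroup R :=
  AddSubgroup.closure {z | ∃ x y : R, z = x * y - y * x}

theorem comm_mem {R : Type*} [NonUnitalRing R] (u v : R) :
    u * v - v * u ∈ commSub R :=
  AddSubgroup.subset_closure ⟨u, v, rfl⟩
section Aux

variable {R : Type*} [NonUnitalRing R]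

theorem comm_shift (a b z w : R) (hz : z ∈ centerAdd R) (hw : w ∈ centerAdd R) :
    (a + z) * (b + w) - (b + w) * (a + z) = a * b - b * a := by
  have hz' : ∀ x : R, z * x = x * z := hz
  have hw' : ∀ x : R, w * x = x * w := hw
  rw [add_mul, add_mul, mul_add, mul_add, mul_add, mul_add,
    hz' b, hz' w, hw' a]
  abel

theorem out_comm (x y : R) :
    x * y - y * x =
      ((QuotientAddGroup.mk x : R ⧸ centerAdd R).out) * ((QuotientAddGroup.mk y : R ⧸ centerAdd R).out)
      - ((QuotientAddGroup.mk y : R ⧸ centerAdd R).out) * ((QuotientAddGroup.mk x : R ⧸ centerAdd R).out) := by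
  set a := (QuotientAddGroup.mk x : R ⧸ centerAdd R).out with ha
  set b := (QuotientAddGroup.mk y : R ⧸ centerAdd R).out with hb
  have hxa : (QuotientAddGroup.mk a : R ⧸ centerAdd R) = QuotientAddGroup.mk x :=
    QuotientAddGroup.out_eq' _
  have hyb : (QuotientAddGroup.mk b : R ⧸ centerAdd R) = QuotientAddGroup.mk y :=
    QuotientAddGroup.out_eq' _
  have hz : x - a ∈ centerAdd R := by
    have := QuotientAddGroup.eq.mp hxa
    simpa [neg_add_eq_sub] using this
  have hw : y - b ∈ centerAdd R := by
    have := QuotientAddGroup.eq.mp hyb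
    simpa [neg_add_eq_sub] using this
  have hx : x = a + (x - a) := by abel
  have hy : y = b + (y - b) := by abel
  calc x * y - y * x = (a + (x - a)) * (b + (y - b)) - (b + (y - b)) * (a + (x - a)) := by
        rw [← hx, ← hy]
    _ = a * b - b * a := comm_shift a b (x - a) (y - b) hz hw

end Aux

/-- if (φ, ψ) is an isoclinism between finite rings R₁, R₂ with
|Z(R₁)| = |Z(R₂)|, then Γ_{R₁}^r ≅ Γ_{R₂}^{ψ(r)} for every r ∈ [R₁, R₁]. -/
theorem stmt10 {R₁ R₂ : Type*} [NonUnitalRing R₁] [NonUnitalRing R₂]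
    [Fintype R₁] [Fintype R₂]
    (hZ : Nat.card (centerAdd R₁) = Nat.card (centerAdd R₂))
    (φ : (R₁ ⧸ centerAdd R₁) ≃+ (R₂ ⧸ centerAdd R₂))
    (ψ : commSub R₁ ≃+ commSub R₂)
    (hcompat : ∀ (u v : R₁) (u' v' : R₂),
      φ (QuotientAddGroup.mk u) = QuotientAddGroup.mk u' →
      φ (QuotientAddGroup.mk v) = QuotientAddGroup.mk v' →
      (ψ ⟨u * v - v * u, comm_mem u v⟩ : R₂) = u' * v' - v' * u')
    (r : commSub R₁) :
    Nonempty (ncGraph (r : R₁) ≃g ncGraph ((ψ r : R₂))) := by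
  classical
  -- a bijection between the centers
  haveI : Fintype (centerAdd R₁) := Fintype.ofFinite _
  haveI : Fintype (centerAdd R₂) := Fintype.ofFinite _
  have hcard : Fintype.card (centerAdd R₁) = Fintype.card (centerAdd R₂) := by
    simpa [Nat.card_eq_fintype_card] using hZ
  obtain ⟨θ⟩ : Nonempty ((centerAdd R₁) ≃ (centerAdd R₂)) :=
    ⟨Fintype.equivOfCardEq hcard⟩
  -- membership facts
  have mem₁ : ∀ x : R₁, x - (QuotientAddGroup.mk x : R₁ ⧸ centerAdd R₁).out ∈ centerAdd R₁ := by
    intro x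
    have := QuotientAddGroup.eq.mp (QuotientAddGroup.out_eq' (QuotientAddGroup.mk x : R₁ ⧸ centerAdd R₁))
    simpa [neg_add_eq_sub] using this
  have mem₂ : ∀ y : R₂, y - (QuotientAddGroup.mk y : R₂ ⧸ centerAdd R₂).out ∈ centerAdd R₂ := by
    intro y
    have := QuotientAddGroup.eq.mp (QuotientAddGroup.out_eq' (QuotientAddGroup.mk y : R₂ ⧸ centerAdd R₂))
    simpa [neg_add_eq_sub] using this
  -- the bijection
  let f : R₁ → R₂ := fun x =>
    (φ (QuotientAddGroup.mk x)).out + (θ ⟨x - (QuotientAddGroup.mk x : R₁ ⧸ centerAdd R₁).out, mem₁ x⟩ : R₂)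
  let g : R₂ → R₁ := fun y =>
    (φ.symm (QuotientAddGroup.mk y)).out +
      (θ.symm ⟨y - (QuotientAddGroup.mk y : R₂ ⧸ centerAdd R₂).out, mem₂ y⟩ : R₁)
  have mkf : ∀ x : R₁, (QuotientAddGroup.mk (f x) : R₂ ⧸ centerAdd R₂) = φ (QuotientAddGroup.mk x) := by
    intro x
    have h1 : (QuotientAddGroup.mk ((φ (QuotientAddGroup.mk x)).out) : R₂ ⧸ centerAdd R₂)
        = φ (QuotientAddGroup.mk x) := QuotientAddGroup.out_eq' _
    have h2 : (QuotientAddGroup.mk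
        ((θ ⟨x - (QuotientAddGroup.mk x : R₁ ⧸ centerAdd R₁).out, mem₁ x⟩ : R₂)) : R₂ ⧸ centerAdd R₂) = 0 :=
      (QuotientAddGroup.eq_zero_iff _).mpr (θ _).2
    show (QuotientAddGroup.mk (_ + _) : R₂ ⧸ centerAdd R₂) = _
    rw [QuotientAddGroup.mk_add, h1, h2, add_zero]
  have mkg : ∀ y : R₂, (QuotientAddGroup.mk (g y) : R₁ ⧸ centerAdd R₁) = φ.symm (QuotientAddGroup.mk y) := by
    intro y
    have h1 : (QuotientAddGroup.mk ((φ.symm (QuotientAddGroup.mk y)).out) : R₁ ⧸ centerAdd R₁)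
        = φ.symm (QuotientAddGroup.mk y) := QuotientAddGroup.out_eq' _
    have h2 : (QuotientAddGroup.mk
        ((θ.symm ⟨y - (QuotientAddGroup.mk y : R₂ ⧸ centerAdd R₂).out, mem₂ y⟩ : R₁)) : R₁ ⧸ centerAdd R₁) = 0 :=
      (QuotientAddGroup.eq_zero_iff _).mpr (θ.symm _).2
    show (QuotientAddGroup.mk (_ + _) : R₁ ⧸ centerAdd R₁) = _
    rw [QuotientAddGroup.mk_add, h1, h2, add_zero]
  have gf : ∀ x : R₁, g (f x) = x := by
    intro x
    have hmk : (QuotientAddGroup.mk (f x) : R₂ ⧸ centerAdd R₂) = φ (QuotientAddGroup.mk x) := mkf x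
    show (φ.symm (QuotientAddGroup.mk (f x))).out +
      (θ.symm ⟨f x - (QuotientAddGroup.mk (f x) : R₂ ⧸ centerAdd R₂).out, mem₂ (f x)⟩ : R₁) = x
    have hsub : f x - (QuotientAddGroup.mk (f x) : R₂ ⧸ centerAdd R₂).out
        = (θ ⟨x - (QuotientAddGroup.mk x : R₁ ⧸ centerAdd R₁).out, mem₁ x⟩ : R₂) := by
      show (φ (QuotientAddGroup.mk x)).out + _ - _ = _
      rw [hmk]; abel
    have : (⟨f x - (QuotientAddGroup.mk (f x) : R₂ ⧸ centerAdd R₂).out, mem₂ (f x)⟩ : centerAdd R₂)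
        = θ ⟨x - (QuotientAddGroup.mk x : R₁ ⧸ centerAdd R₁).out, mem₁ x⟩ := Subtype.ext hsub
    rw [this, θ.symm_apply_apply, hmk, φ.symm_apply_apply]
    rw [add_comm, sub_add_cancel]
  have fg : ∀ y : R₂, f (g y) = y := by
    intro y
    have hmk : (QuotientAddGroup.mk (g y) : R₁ ⧸ centerAdd R₁) = φ.symm (QuotientAddGroup.mk y) := mkg y
    show (φ (QuotientAddGroup.mk (g y))).out +
      (θ ⟨g y - (QuotientAddGroup.mk (g y) : R₁ ⧸ centerAdd R₁).out, mem₁ (g y)⟩ : R₂) = y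
    have hsub : g y - (QuotientAddGroup.mk (g y) : R₁ ⧸ centerAdd R₁).out
        = (θ.symm ⟨y - (QuotientAddGroup.mk y : R₂ ⧸ centerAdd R₂).out, mem₂ y⟩ : R₁) := by
      show (φ.symm (QuotientAddGroup.mk y)).out + _ - _ = _
      rw [hmk]; abel
    have : (⟨g y - (QuotientAddGroup.mk (g y) : R₁ ⧸ centerAdd R₁).out, mem₁ (g y)⟩ : centerAdd R₁)
        = θ.symm ⟨y - (QuotientAddGroup.mk y : R₂ ⧸ centerAdd R₂).out, mem₂ y⟩ := Subtype.ext hsub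
    rw [this, θ.apply_symm_apply, hmk, φ.apply_symm_apply]
    rw [add_comm, sub_add_cancel]
  let e : R₁ ≃ R₂ := ⟨f, g, gf, fg⟩
  -- commutator compatibility
  have key : ∀ x y : R₁,
      f x * f y - f y * f x = (ψ ⟨x * y - y * x, comm_mem x y⟩ : R₂) := by
    intro x y
    have hfx : f x * f y - f y * f x
        = (φ (QuotientAddGroup.mk x)).out * (φ (QuotientAddGroup.mk y)).out
          - (φ (QuotientAddGroup.mk y)).out * (φ (QuotientAddGroup.mk x)).out := by
      exact comm_shift _ _ _ _ (θ _).2 (θ _).2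
    have hxy : x * y - y * x
        = (QuotientAddGroup.mk x : R₁ ⧸ centerAdd R₁).out * (QuotientAddGroup.mk y : R₁ ⧸ centerAdd R₁).out
          - (QuotientAddGroup.mk y : R₁ ⧸ centerAdd R₁).out * (QuotientAddGroup.mk x : R₁ ⧸ centerAdd R₁).out :=
      out_comm x y
    have hc := hcompat ((QuotientAddGroup.mk x : R₁ ⧸ centerAdd R₁).out)
      ((QuotientAddGroup.mk y : R₁ ⧸ centerAdd R₁).out)
      ((φ (QuotientAddGroup.mk x)).out) ((φ (QuotientAddGroup.mk y)).out)
      (by rw [QuotientAddGroup.out_eq', QuotientAddGroup.out_eq'])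
      (by rw [QuotientAddGroup.out_eq', QuotientAddGroup.out_eq'])
    rw [hfx, ← hc]
    exact congrArg (fun t => ((ψ t : commSub R₂) : R₂)) (Subtype.ext hxy.symm)
  -- the graph isomorphism
  refine ⟨⟨e, ?_⟩⟩
  intro x y
  constructor
  · rintro ⟨h1, h2, h3⟩
    refine ⟨fun h => h1 (congrArg e h), ?_, ?_⟩
    · intro h
      apply h2
      show f x * f y - f y * f x = _
      have hr : (⟨x * y - y * x, comm_mem x y⟩ : commSub R₁) = r := Subtype.ext h
      rw [key x y, hr]
    · intro h
      apply h3
      show f x * f y - f y * f x = _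
      have hr : (⟨x * y - y * x, comm_mem x y⟩ : commSub R₁) = -r := Subtype.ext (by simpa using h)
      rw [key x y, hr, map_neg]
      simp
  · rintro ⟨h1, h2, h3⟩
    refine ⟨fun h => h1 (e.injective h), ?_, ?_⟩
    · intro h
      apply h2
      have : (ψ ⟨x * y - y * x, comm_mem x y⟩ : commSub R₂) = ψ r := by
        apply Subtype.ext
        rw [← key x y]; exact h
      have := ψ.injective this
      exact congrArg Subtype.val this
    · intro h
      apply h3
      have : (ψ ⟨x * y - y * x, comm_mem x y⟩ : commSub R₂) = ψ (-r) := by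
        apply Subtype.ext
        rw [← key x y]
        rw [map_neg]; exact h
      have := ψ.injective this
      have := congrArg Subtype.val this
      simpa using this
end

section
/- Let R be a finite noncommutative ring with |R| ≠ 8 and let r ∈ K(R). Then the graph Δ_R^r is not a tree. -/
/-- The center of R as a set. -/
def centerSet (R : Type*) [NonUnitalRing R] : Set R := {z | ∀ x, z * x = x * z}

/-- The induced subgraph of the r-noncommuting graph on the non-central elements. -/
def deltaGraph {R : Type*} [NonUnitalRing R] (r : R) :
    SimpleGraph {x : R // x ∉ centerSet R} :=
  (ncGraph r).comap Subtype.val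

private lemma delta_adj {R : Type*} [NonUnitalRing R] {r : R}
    {x y : {t : R // t ∉ centerSet R}} :
    (deltaGraph r).Adj x y ↔
      ((x : R) ≠ y ∧ (x : R) * y - (y : R) * x ≠ r ∧ (x : R) * y - (y : R) * x ≠ -r) :=
  Iff.rfl

private lemma zero_center (R : Type*) [NonUnitalRing R] : (0 : R) ∈ centerSet R :=
  fun x => by rw [zero_mul, mul_zero]

private lemma no_triangle {V : Type*} {G : SimpleGraph V} (ht : G.IsTree)
    {x y z : V} (hxy : G.Adj x y) (hyz : G.Adj y z) (hxz : G.Adj x z) : False := by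
  have hpath : (SimpleGraph.Walk.cons hxy (SimpleGraph.Walk.cons hyz SimpleGraph.Walk.nil)).IsPath := by
    rw [SimpleGraph.Walk.isPath_def]
    simp [hxy.ne, hyz.ne, hxz.ne]
  have h1 := (ht.existsUnique_path x z).unique hpath (SimpleGraph.Path.singleton hxz).2
  have h2 := congrArg SimpleGraph.Walk.length h1
  simp [SimpleGraph.Path.singleton] at h2

private lemma walk_pair {V : Type*} {G : SimpleGraph V} {x x' : V}
    (hx : ∀ u, G.Adj x u → u = x') (hx' : ∀ u, G.Adj x' u → u = x) :
    ∀ {v w : V}, G.Walk v w → (v = x ∨ v = x') → (w = x ∨ w = x') := by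
  intro v w p
  induction p with
  | nil => exact id
  | cons h p ih =>
    rintro (rfl | rfl)
    · exact ih (Or.inr (hx _ h))
    · exact ih (Or.inl (hx' _ h))

private lemma exists_adj_of_reachable {V : Type*} {G : SimpleGraph V} {u v : V}
    (h : G.Reachable u v) (hne : u ≠ v) : ∃ w, G.Adj u w := by
  obtain ⟨p⟩ := h
  cases p with
  | nil => exact absurd rfl hne
  | cons h p => exact ⟨_, h⟩

private lemma clone_no_tree {R : Type*} [NonUnitalRing R] {r : R}
    (hnc : ∃ a b : R, a * b ≠ b * a) (hr0 : r ≠ 0)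
    {x x' : R} (hx : x ∉ centerSet R) (hx' : x' ∉ centerSet R)
    (hne : x ≠ x') (hcomm : x * x' = x' * x)
    (hclone : ∀ y : R, x' * y - y * x' = x * y - y * x ∨
      x' * y - y * x' = -(x * y - y * x)) :
    ¬ (deltaGraph r).IsTree := by
  intro ht
  have hbad : ∀ u : R, (x * u - u * x ≠ r ∧ x * u - u * x ≠ -r) →
      (x' * u - u * x' ≠ r ∧ x' * u - u * x' ≠ -r) := by
    intro u hu
    rcases hclone u with h | h <;> rw [h]
    · exact hu
    · constructor
      · intro hh; exact hu.2 (neg_eq_iff_eq_neg.mp hh)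
      · intro hh; exact hu.1 (neg_injective hh)
  have hbad' : ∀ u : R, (x' * u - u * x' ≠ r ∧ x' * u - u * x' ≠ -r) →
      (x * u - u * x ≠ r ∧ x * u - u * x ≠ -r) := by
    intro u hu
    rcases hclone u with h | h
    · rw [← h]; exact hu
    · have h2 : x * u - u * x = -(x' * u - u * x') := by rw [h, neg_neg]
      rw [h2]
      constructor
      · intro hh; exact hu.2 (neg_eq_iff_eq_neg.mp hh)
      · intro hh; exact hu.1 (neg_injective hh)
  set vx : {t : R // t ∉ centerSet R} := ⟨x, hx⟩ with hvx
  set vx' : {t : R // t ∉ centerSet R} := ⟨x', hx'⟩ with hvx'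
  have hzero : x * x' - x' * x = 0 := sub_eq_zero_of_eq hcomm
  have hedge : (deltaGraph r).Adj vx vx' := by
    refine delta_adj.mpr ⟨hne, ?_, ?_⟩ <;> rw [hzero]
    · exact fun h => hr0 h.symm
    · exact fun h => hr0 (neg_eq_zero.mp h.symm)
  have hnbr : ∀ u, (deltaGraph r).Adj vx u → u = vx' := by
    intro u hadj
    by_contra hu
    obtain ⟨h1, h2, h3⟩ := delta_adj.mp hadj
    have h4 : (deltaGraph r).Adj vx' u := by
      refine delta_adj.mpr ⟨fun h => hu (Subtype.ext h.symm), (hbad u ⟨h2, h3⟩).1, (hbad u ⟨h2, h3⟩).2⟩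
    exact no_triangle ht hedge h4 hadj
  have hnbr' : ∀ u, (deltaGraph r).Adj vx' u → u = vx := by
    intro u hadj
    by_contra hu
    obtain ⟨h1, h2, h3⟩ := delta_adj.mp hadj
    have h4 : (deltaGraph r).Adj vx u := by
      refine delta_adj.mpr ⟨fun h => hu (Subtype.ext h.symm), (hbad' u ⟨h2, h3⟩).1, (hbad' u ⟨h2, h3⟩).2⟩
    exact no_triangle ht hedge.symm h4 hadj
  obtain ⟨a, b, hab⟩ := hnc
  have ha : a ∉ centerSet R := fun h => hab (h b)
  have hb : b ∉ centerSet R := fun h => hab ((h a).symm)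
  have hva := walk_pair hnbr hnbr'
    ((ht.isConnected.preconnected vx ⟨a, ha⟩).some) (Or.inl rfl)
  have hvb := walk_pair hnbr hnbr'
    ((ht.isConnected.preconnected vx ⟨b, hb⟩).some) (Or.inl rfl)
  rcases hva with h1 | h1 <;> rcases hvb with h2 | h2 <;>
    (have e1 := congrArg Subtype.val h1
     have e2 := congrArg Subtype.val h2
     simp only [hvx, hvx'] at e1 e2
     subst e1; subst e2
     first
      | exact hab rfl
      | exact hab hcomm
      | exact hab hcomm.symm)

/-- if R is noncommutative with |R| ≠ 8 and r ∈ K(R), then Δ_R^r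
is not a tree. -/
theorem stmt16 {R : Type*} [NonUnitalRing R] [Fintype R]
    (hnc : ∃ a b : R, a * b ≠ b * a) (hcard : Nat.card R ≠ 8)
    (r : R) (hr : ∃ a b : R, a * b - b * a = r) :
    ¬ (deltaGraph r).IsTree := by
  intro ht
  obtain ⟨a, b, hab⟩ := hnc
  have ha : a ∉ centerSet R := fun h => hab (h b)
  have hb : b ∉ centerSet R := fun h => hab ((h a).symm)
  have ha0 : a ≠ 0 := fun h => ha (h ▸ zero_center R)
  have hb0 : b ≠ 0 := fun h => hb (h ▸ zero_center R)
  have hne_ab : a ≠ b := fun h => hab (by rw [h])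
  by_cases hr0 : r = 0
  · -- Case 1 : r = 0, triangle {a, b, a+b}
    subst hr0
    have hs : a * b - b * a ≠ 0 := sub_ne_zero_of_ne hab
    have hcab : a + b ∉ centerSet R := by
      intro h
      have h1 := h b
      rw [add_mul, mul_add] at h1
      exact hab (add_right_cancel h1)
    refine no_triangle ht (x := (⟨a, ha⟩ : {t : R // t ∉ centerSet R}))
      (y := ⟨b, hb⟩) (z := ⟨a + b, hcab⟩) ?_ ?_ ?_
    · exact delta_adj.mpr ⟨hne_ab, hs, by rw [neg_zero]; exact hs⟩
    · refine delta_adj.mpr ⟨fun h => ha0 (right_eq_add.mp h), ?_, ?_⟩ <;>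
        · have hcomp : b * (a + b) - (a + b) * b = b * a - a * b := by
            rw [mul_add, add_mul]; abel
          rw [hcomp]
          first
            | exact sub_ne_zero_of_ne hab.symm
            | (rw [neg_zero]; exact sub_ne_zero_of_ne hab.symm)
    · refine delta_adj.mpr ⟨fun h => hb0 (left_eq_add.mp h), ?_, ?_⟩ <;>
        · have hcomp : a * (a + b) - (a + b) * a = a * b - b * a := by
            rw [mul_add, add_mul]; abel
          rw [hcomp]
          first
            | exact hs
            | (rw [neg_zero]; exact hs)
  · by_cases hz : ∃ z, z ∈ centerSet R ∧ z ≠ 0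
    · -- Case 2a : nonzero central element z, clone a ↦ a + z
      obtain ⟨z, hzc, hz0⟩ := hz
      have hx' : a + z ∉ centerSet R := by
        intro h
        apply ha
        intro w
        have h1 := h w
        rw [add_mul, mul_add, hzc w] at h1
        exact add_right_cancel h1
      refine clone_no_tree ⟨a, b, hab⟩ hr0 ha hx' ?_ ?_ ?_ ht
      · exact fun h => hz0 (left_eq_add.mp h)
      · rw [mul_add, add_mul, hzc a]
      · intro y
        left
        rw [add_mul, mul_add, hzc y]
        abel
    · push_neg at hz
      by_cases h2 : ∃ x, x ∉ centerSet R ∧ x + x ≠ 0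
      · -- Case 2b : some noncentral x with 2x ≠ 0, clone x ↦ -x
        obtain ⟨x, hx, hxx⟩ := h2
        have hx' : -x ∉ centerSet R := by
          intro h
          apply hx
          intro w
          have h1 := h w
          rw [neg_mul, mul_neg] at h1
          exact neg_injective h1
        refine clone_no_tree ⟨a, b, hab⟩ hr0 hx hx' ?_ ?_ ?_ ht
        · intro h
          apply hxx
          nth_rewrite 2 [h]
          rw [add_neg_cancel]
        · rw [mul_neg, neg_mul]
        · intro y
          right
          rw [neg_mul, mul_neg]
          abel
      · -- Case 2c : trivial center, char 2
        push_neg at h2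
        have hchar : ∀ x : R, x + x = 0 := by
          intro x
          by_cases hxc : x ∈ centerSet R
          · rw [hz x hxc, add_zero]
          · exact h2 x hxc
        have hneg : ∀ x : R, -x = x := fun x => neg_eq_of_add_eq_zero_left (hchar x)
        classical
        -- centralizers are {0, x}
        have hC : ∀ x y : R, x ∉ centerSet R → x * y = y * x → y = 0 ∨ y = x := by
          intro x y hx hxy
          by_contra hcon
          push_neg at hcon
          obtain ⟨hy0, hyx⟩ := hcon
          have hyc : y ∉ centerSet R := fun h => hy0 (hz y h)
          have hxyc : x + y ∉ centerSet R := by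
            intro h
            apply hyx
            have h0 := hz _ h
            have h1 : y = -x := eq_neg_of_add_eq_zero_right h0
            rwa [hneg] at h1
          have hx0 : x ≠ 0 := fun h => hx (h ▸ zero_center R)
          have mkadj : ∀ u v : {t : R // t ∉ centerSet R}, (u : R) ≠ v →
              (u : R) * v = (v : R) * u → (deltaGraph r).Adj u v := by
            intro u v h1 h3
            refine delta_adj.mpr ⟨h1, ?_, ?_⟩ <;> rw [sub_eq_zero_of_eq h3]
            · exact fun h => hr0 h.symm
            · exact fun h => hr0 (neg_eq_zero.mp h.symm)
          refine no_triangle ht (x := (⟨x, hx⟩ : {t : R // t ∉ centerSet R}))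
            (y := ⟨y, hyc⟩) (z := ⟨x + y, hxyc⟩) ?_ ?_ ?_
          · exact mkadj _ _ (fun h => hyx h.symm) hxy
          · exact mkadj _ _ (fun h => hx0 (right_eq_add.mp h))
              (by rw [mul_add, add_mul, hxy])
          · exact mkadj _ _ (fun h => hy0 (left_eq_add.mp h))
              (by rw [mul_add, add_mul, hxy])
        -- find a leaf
        have hleaf : ∃ v : {t : R // t ∉ centerSet R}, (deltaGraph r).degree v ≤ 1 := by
          by_contra hcon
          push_neg at hcon
          have h1 := (deltaGraph r).sum_degrees_eq_twice_card_edges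
          have h2 := ht.card_edgeFinset
          have h3 : Fintype.card {t : R // t ∉ centerSet R} * 2 ≤
              ∑ v, (deltaGraph r).degree v := by
            rw [Fintype.card, ← smul_eq_mul]
            exact Finset.card_nsmul_le_sum _ _ _ (fun v _ => hcon v)
          rw [h1] at h3
          omega
        obtain ⟨v, hdeg⟩ := hleaf
        have hr2 : -r = r := hneg r
        have hbadr : ∀ u : {t : R // t ∉ centerSet R}, u ≠ v →
            u ∉ (deltaGraph r).neighborFinset v → (v : R) * u - (u : R) * v = r := by
          intro u hu hnadj
          rw [SimpleGraph.mem_neighborFinset] at hnadj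
          by_contra hcon2
          exact hnadj (delta_adj.mpr ⟨fun h => hu (Subtype.ext h).symm, hcon2,
            by rw [hr2]; exact hcon2⟩)
        have hScard : (Finset.univ \ insert v ((deltaGraph r).neighborFinset v)).card ≤ 2 := by
          set S := Finset.univ \ insert v ((deltaGraph r).neighborFinset v) with hS
          rcases S.eq_empty_or_nonempty with hSe | ⟨w, hw⟩
          · rw [hSe]; simp
          · have hmem : ∀ u, u ∈ S → u ≠ v ∧ u ∉ (deltaGraph r).neighborFinset v := by
              intro u hu
              rw [hS, Finset.mem_sdiff, Finset.mem_insert] at hu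
              push_neg at hu
              exact hu.2
            have hwprop : ∀ u ∈ S, (u : R) = w ∨ (u : R) = (w : R) + v := by
              intro u hu
              have hcu := hbadr u (hmem u hu).1 (hmem u hu).2
              have hcw := hbadr w (hmem w hw).1 (hmem w hw).2
              have h0 : (v : R) * ((u : R) + w) - ((u : R) + w) * v =
                  ((v : R) * u - (u : R) * v) + ((v : R) * w - (w : R) * v) := by
                rw [mul_add, add_mul]; abel
              rw [hcu, hcw, hchar r] at h0
              have h1 : (v : R) * ((u : R) + w) = ((u : R) + w) * v := sub_eq_zero.mp h0
              rcases hC (v : R) ((u : R) + w) v.2 h1 with h | h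
              · left
                have h3 : (u : R) = -(w : R) := eq_neg_of_add_eq_zero_left h
                rwa [hneg] at h3
              · right
                have h3 : (u : R) = (v : R) - w := eq_sub_of_add_eq h
                rw [sub_eq_add_neg, hneg] at h3
                rw [h3, add_comm]
            calc S.card ≤ ({(w : R), (w : R) + (v : R)} : Finset R).card :=
                  Finset.card_le_card_of_injOn (fun u => (u : R))
                    (fun u hu => by
                      rcases hwprop u hu with h | h <;> simp [h])
                    (fun u1 _ u2 _ h => Subtype.ext h)
              _ ≤ 2 := (Finset.card_insert_le _ _).trans (by simp)
        -- card of vertex set ≤ 4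
        have hVt : Fintype.card {t : R // t ∉ centerSet R} ≤ 4 := by
          have h1 := Finset.card_sdiff_add_card_eq_card
            (Finset.subset_univ (insert v ((deltaGraph r).neighborFinset v)))
          have h2 : (insert v ((deltaGraph r).neighborFinset v)).card ≤ 2 := by
            have h5 : ((deltaGraph r).neighborFinset v).card ≤ 1 := hdeg
            have h6 := Finset.card_insert_le v ((deltaGraph r).neighborFinset v)
            omega
          rw [← Finset.card_univ]
          omega
        -- card R ≤ 5
        have hR5 : Fintype.card R ≤ 5 := by
          have hsub : (Finset.univ : Finset R) ⊆
              insert 0 (Finset.univ.image (fun t : {t : R // t ∉ centerSet R} => (t : R))) := by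
            intro x _
            by_cases hxc : x ∈ centerSet R
            · rw [hz x hxc]; exact Finset.mem_insert_self _ _
            · exact Finset.mem_insert_of_mem
                (Finset.mem_image.mpr ⟨⟨x, hxc⟩, Finset.mem_univ _, rfl⟩)
          have h1 := Finset.card_le_card hsub
          have h2 := Finset.card_insert_le (0 : R)
            (Finset.univ.image (fun t : {t : R // t ∉ centerSet R} => (t : R)))
          have h3 := Finset.card_image_le (s := (Finset.univ : Finset {t : R // t ∉ centerSet R}))
            (f := fun t : {t : R // t ∉ centerSet R} => (t : R))
          rw [Finset.card_univ] at h3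
          rw [← Finset.card_univ]
          omega
        -- 2 divides card R
        haveI : Fact (Nat.Prime 2) := ⟨Nat.prime_two⟩
        have ho : addOrderOf a = 2 :=
          addOrderOf_eq_prime (by rw [two_nsmul]; exact hchar a) ha0
        have hdvd : 2 ∣ Fintype.card R := ho ▸ addOrderOf_dvd_card
        -- card R ≥ 4
        have hab0 : a + b ≠ 0 := by
          intro h
          apply hne_ab
          have h1 : a = -b := eq_neg_of_add_eq_zero_left h
          rwa [hneg] at h1
        have hmb : b ∉ ({a + b} : Finset R) := by
          rw [Finset.mem_singleton]
          exact fun h => ha0 (right_eq_add.mp h)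
        have hma : a ∉ insert b ({a + b} : Finset R) := by
          rw [Finset.mem_insert, Finset.mem_singleton]
          push_neg
          exact ⟨hne_ab, fun h => hb0 (left_eq_add.mp h)⟩
        have hm0 : (0 : R) ∉ insert a (insert b ({a + b} : Finset R)) := by
          rw [Finset.mem_insert, Finset.mem_insert, Finset.mem_singleton]
          push_neg
          exact ⟨fun h => ha0 h.symm, fun h => hb0 h.symm, fun h => hab0 h.symm⟩
        have h4 : ({0, a, b, a + b} : Finset R).card = 4 := by
          rw [Finset.card_insert_of_notMem hm0, Finset.card_insert_of_notMem hma,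
            Finset.card_insert_of_notMem hmb, Finset.card_singleton]
        have h4le : 4 ≤ Fintype.card R := by
          rw [← h4, ← Finset.card_univ]
          exact Finset.card_le_card (Finset.subset_univ _)
        have hcard4 : Fintype.card R = 4 := by omega
        have huniv : ∀ x : R, x = 0 ∨ x = a ∨ x = b ∨ x = a + b := by
          have heq : ({0, a, b, a + b} : Finset R) = Finset.univ :=
            Finset.eq_of_subset_of_card_le (Finset.subset_univ _)
              (by rw [Finset.card_univ, hcard4, h4])
          intro x
          have hx := Finset.mem_univ x
          rw [← heq] at hx
          simpa [Finset.mem_insert, Finset.mem_singleton] using hx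
        -- r = a*b - b*a
        have key : ∀ p q : R, p * q - q * p = 0 ∨ p * q - q * p = a * b - b * a ∨
            p * q - q * p = -(a * b - b * a) := by
          intro p q
          rcases huniv p with hp | hp | hp | hp <;> rcases huniv q with hq | hq | hq | hq <;>
            rw [hp, hq] <;>
            first
              | (left; simp)
              | (right; left; (try simp only [mul_add, add_mul]) <;> abel1)
              | (right; right; (try simp only [mul_add, add_mul]) <;> abel1)
        obtain ⟨p, q, hpq⟩ := hr
        have key2 := key p q
        rw [hpq] at key2
        have hrval : r = a * b - b * a := by
          rcases key2 with h | h | h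
          · exact absurd h hr0
          · exact h
          · rwa [hneg] at h
        -- no edges at vertex a : contradiction with connectivity
        have hreach := ht.isConnected.preconnected (⟨a, ha⟩ : {t : R // t ∉ centerSet R}) ⟨b, hb⟩
        obtain ⟨u, hadj⟩ := exists_adj_of_reachable hreach
          (fun h => hne_ab (congrArg Subtype.val h))
        obtain ⟨hval, hc1, hc2⟩ := delta_adj.mp hadj
        have hu0 : (u : R) ≠ 0 := fun h => u.2 (h ▸ zero_center R)
        rcases huniv (u : R) with h | h | h | h
        · exact hu0 h
        · exact hval h.symm
        · apply hc1; rw [h, hrval]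
        · apply hc1
          rw [h, hrval]
          simp only [mul_add, add_mul]
          abel
end
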